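/- Let (X,d) be a metric space, μ, ν ∈ 𝓜(X), f bounded continuous with sup f < 1, and let α ∈ 𝓜₂(𝔠²) satisfy 𝔥₁²α = μ, 𝔥₂²α = ν. Then ∫_X f dμ + ∫_X Sf dν ≤ ∫_{𝔠²} (r₁² + r₂² − 2r₁r₂ cos(d_{π/2}(x₁,x₂))) dα([x₁,r₁],[x₂,r₂]). -/

import Mathlib

open Real MeasureTheory ENNReal

/-- Squared cone distance `d_𝔠²([x₁,r₁],[x₂,r₂]) = r₁² + r₂² − 2r₁r₂ cos(min(d(x₁,x₂),π))`,
on representatives in `X × ℝ`. -/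
noncomputable def coneCost {X : Type*} [MetricSpace X] (p q : X × ℝ) : ℝ :=
  p.2 ^ 2 + q.2 ^ 2 - 2 * p.2 * q.2 * Real.cos (min (dist p.1 q.1) π)

/-- First homogeneous marginal `𝔥₁²α = (x₁)_#(r₁² α)` of a plan on the (squared) cone. -/
noncomputable def hmarg1 {X : Type*} [MeasurableSpace X]
    (α : Measure ((X × ℝ) × (X × ℝ))) : Measure X :=
  Measure.map (fun p => p.1.1) (α.withDensity fun p => ENNReal.ofReal (p.1.2 ^ 2))

/-- Second homogeneous marginal `𝔥₂²α = (x₂)_#(r₂² α)`. -/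
noncomputable def hmarg2 {X : Type*} [MeasurableSpace X]
    (α : Measure ((X × ℝ) × (X × ℝ))) : Measure X :=
  Measure.map (fun p => p.2.1) (α.withDensity fun p => ENNReal.ofReal (p.2.2 ^ 2))

/-- The squared Hellinger–Kantorovich distance:
`HK²(μ₁,μ₂) = inf { ∫ d_𝔠²(η₁,η₂) dα : 𝔥ᵢ²α = μᵢ }`. -/
noncomputable def HK2 {X : Type*} [MetricSpace X] [MeasurableSpace X]
    (μ ν : Measure X) : ℝ≥0∞ :=
  ⨅ (α : Measure ((X × ℝ) × (X × ℝ))) (_ : hmarg1 α = μ) (_ : hmarg2 α = ν),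
    ∫⁻ p, ENNReal.ofReal (coneCost p.1 p.2) ∂α

/-- `Sf(y) = inf_{x ∈ X} (1 − cos²(d_{π/2}(x,y))/(1−f(x)))`. -/
noncomputable def Stransform {X : Type*} [MetricSpace X] (f : X → ℝ) (y : X) : ℝ :=
  ⨅ x : X, (1 - Real.cos (min (dist x y) (π / 2)) ^ 2 / (1 - f x))

lemma abs_sin_le_abs' (x : ℝ) : |Real.sin x| ≤ |x| := by
  rcases le_total 0 x with h | h
  · rw [abs_of_nonneg h, abs_le]
    refine ⟨?_, Real.sin_le h⟩
    rcases le_total x π with hp | hp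
    · have := Real.sin_nonneg_of_nonneg_of_le_pi h hp; linarith
    · have := Real.neg_one_le_sin x
      have := Real.pi_gt_three; linarith
  · rw [abs_of_nonpos h, abs_le]
    refine ⟨by simpa using Real.le_sin h, ?_⟩
    rcases le_total (-π) x with hp | hp
    · have : Real.sin x ≤ 0 := by
        have := Real.sin_nonneg_of_nonneg_of_le_pi (x := -x) (by linarith) (by linarith)
        rw [Real.sin_neg] at this; linarith
      linarith
    · have := Real.sin_le_one x
      have := Real.pi_gt_three; linarith

lemma abs_cos_sub_cos_le' (a b : ℝ) : |Real.cos a - Real.cos b| ≤ |a - b| := by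
  rw [Real.cos_sub_cos]
  have h1 : |Real.sin ((a+b)/2)| ≤ 1 := abs_le.2 ⟨Real.neg_one_le_sin _, Real.sin_le_one _⟩
  have h2 : |Real.sin ((a-b)/2)| ≤ |(a-b)/2| := abs_sin_le_abs' _
  calc |(-2) * Real.sin ((a+b)/2) * Real.sin ((a-b)/2)|
      = 2 * |Real.sin ((a+b)/2)| * |Real.sin ((a-b)/2)| := by
        rw [abs_mul, abs_mul]; norm_num
    _ ≤ 2 * 1 * |(a-b)/2| := by
        apply mul_le_mul (mul_le_mul_of_nonneg_left h1 (by norm_num)) h2 (abs_nonneg _)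
        norm_num
    _ = |a - b| := by rw [abs_div]; norm_num; linarith [abs_nonneg (a-b)]

lemma abs_min_sub_min_le' (a b c : ℝ) : |min a c - min b c| ≤ |a - b| := by
  rcases le_total a c with h1 | h1 <;> rcases le_total b c with h2 | h2 <;>
    simp [min_eq_left, min_eq_right, h1, h2] <;>
    cases' abs_cases (a - b) with h h <;> rw [abs_le] <;> constructor <;> linarith

/-- For any plan `α` with homogeneous marginals `μ, ν` (and finite second moment) and any
admissible `f`, one has `∫ f dμ + ∫ Sf dν ≤ ∫ (r₁² + r₂² − 2r₁r₂ cos d_{π/2}) dα`. -/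
theorem integral_Stransform_le_cone_cost {X : Type*} [MetricSpace X] [MeasurableSpace X]
    [BorelSpace X] (μ ν : Measure X) [IsFiniteMeasure μ] [IsFiniteMeasure ν]
    (f : X → ℝ) (hc : Continuous f) (hb : ∃ C, ∀ x, |f x| ≤ C)
    (hf : ∃ M < (1 : ℝ), ∀ x, f x ≤ M)
    (α : Measure ((X × ℝ) × (X × ℝ)))
    (hmom : ∫⁻ p, ENNReal.ofReal (p.1.2 ^ 2 + p.2.2 ^ 2) ∂α < ⊤)
    (h1 : hmarg1 α = μ) (h2 : hmarg2 α = ν) :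
    ENNReal.ofReal (∫ x, f x ∂μ + ∫ y, Stransform f y ∂ν) ≤
      ∫⁻ p, ENNReal.ofReal (p.1.2 ^ 2 + p.2.2 ^ 2 -
        2 * p.1.2 * p.2.2 * Real.cos (min (dist p.1.1 p.2.1) (π / 2))) ∂α := by
  rcases isEmpty_or_nonempty X with hX | hX
  · have hμ : μ = 0 := Measure.eq_zero_of_isEmpty μ
    have hν : ν = 0 := Measure.eq_zero_of_isEmpty ν
    simp [hμ, hν]
  obtain ⟨M, hM, hfM⟩ := hf
  obtain ⟨C, hC⟩ := hb
  have hε : (0:ℝ) < 1 - M := by linarith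
  have hfx : ∀ x, (0:ℝ) < 1 - f x := fun x => by have := hfM x; linarith
  set g : X → X → ℝ := fun x y => 1 - Real.cos (min (dist x y) (π / 2)) ^ 2 / (1 - f x)
    with hgdef
  have hg_lb : ∀ x y, 1 - 1/(1-M) ≤ g x y := by
    intro x y
    have : Real.cos (min (dist x y) (π / 2)) ^ 2 / (1 - f x) ≤ 1 / (1 - M) :=
      div_le_div₀ zero_le_one (Real.cos_sq_le_one _) hε (by have := hfM x; linarith)
    simp only [hgdef]; linarith
  have hg_ub : ∀ x y, g x y ≤ 1 := by
    intro x y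
    have : 0 ≤ Real.cos (min (dist x y) (π / 2)) ^ 2 / (1 - f x) :=
      div_nonneg (sq_nonneg _) (hfx x).le
    simp only [hgdef]; linarith
  have hSg : ∀ y, Stransform f y = ⨅ x, g x y := fun y => rfl
  have hbdd : ∀ y, BddBelow (Set.range fun x => g x y) := by
    intro y
    exact ⟨1 - 1/(1-M), by rintro _ ⟨x, rfl⟩; exact hg_lb x y⟩
  have hS_le : ∀ x y, Stransform f y ≤ g x y := by
    intro x y; rw [hSg]; exact ciInf_le (hbdd y) x
  have hS_lb : ∀ y, 1 - 1/(1-M) ≤ Stransform f y := by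
    intro y; rw [hSg]; exact le_ciInf fun x => hg_lb x y
  have hS_ub : ∀ y, Stransform f y ≤ 1 := fun y =>
    (hS_le (Classical.arbitrary X) y).trans (hg_ub _ y)
  -- Lipschitz bound for Stransform
  set L : ℝ := 2 / (1 - M) with hLdef
  have hL0 : 0 ≤ L := by positivity
  have hkey : ∀ y y' x, g x y ≤ g x y' + L * dist y y' := by
    intro y y' x
    set θ := min (dist x y) (π / 2)
    set θ' := min (dist x y') (π / 2)
    have hd : |θ' - θ| ≤ dist y y' := by
      refine (abs_min_sub_min_le' (dist x y') (dist x y) (π/2)).trans ?_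
      rw [dist_comm x y', dist_comm x y]
      simpa [dist_comm y y'] using abs_dist_sub_le y' y x
    have hnum : Real.cos θ' ^ 2 - Real.cos θ ^ 2 ≤ 2 * dist y y' := by
      have h₁ : |Real.cos θ' - Real.cos θ| ≤ dist y y' :=
        (abs_cos_sub_cos_le' θ' θ).trans hd
      have hsum : |Real.cos θ' + Real.cos θ| ≤ 2 :=
        abs_le.2 ⟨by have := Real.neg_one_le_cos θ'; have := Real.neg_one_le_cos θ; linarith,
          by have := Real.cos_le_one θ'; have := Real.cos_le_one θ; linarith⟩
      calc Real.cos θ' ^ 2 - Real.cos θ ^ 2 ≤ |Real.cos θ' ^ 2 - Real.cos θ ^ 2| :=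
            le_abs_self _
        _ = |Real.cos θ' - Real.cos θ| * |Real.cos θ' + Real.cos θ| := by
            rw [← abs_mul]; ring_nf
        _ ≤ dist y y' * 2 := mul_le_mul h₁ hsum (abs_nonneg _) dist_nonneg
        _ = 2 * dist y y' := by ring
    have hdiff : g x y - g x y' = (Real.cos θ' ^ 2 - Real.cos θ ^ 2) / (1 - f x) := by
      have h0 := (hfx x).ne'
      simp only [hgdef]
      field_simp
      simp only [θ, θ']; ring
    have hstep1 : (Real.cos θ' ^ 2 - Real.cos θ ^ 2) / (1 - f x)
        ≤ (2 * dist y y') / (1 - f x) := (div_le_div_iff_of_pos_right (hfx x)).mpr hnum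
    have hstep2 : (2 * dist y y') / (1 - f x) ≤ (2 * dist y y') / (1 - M) :=
      div_le_div_of_nonneg_left (by positivity) hε (by have := hfM x; linarith)
    have hLd : L * dist y y' = (2 * dist y y') / (1 - M) := by
      rw [hLdef]; ring
    rw [hLd]
    linarith [hdiff, hstep1, hstep2]
  have hlip : ∀ y y', Stransform f y ≤ Stransform f y' + L * dist y y' := by
    intro y y'
    rw [← sub_le_iff_le_add, hSg y']
    refine le_ciInf fun x => ?_
    have h1 : Stransform f y ≤ g x y := hS_le x y
    have h2 : g x y ≤ g x y' + L * dist y y' := hkey y y' x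
    linarith
  have hScont : Continuous (Stransform f) := by
    have : LipschitzWith (Real.toNNReal L) (Stransform f) := by
      apply LipschitzWith.of_dist_le_mul
      intro y y'
      rw [Real.dist_eq, Real.coe_toNNReal L hL0, abs_sub_le_iff]
      constructor
      · have := hlip y y'; linarith
      · have := hlip y' y; rw [dist_comm] at this; linarith
    exact this.continuous
  have hSmeas : Measurable (Stransform f) := hScont.measurable
  -- the pointwise inequality
  have hpoint : ∀ p : (X × ℝ) × (X × ℝ),
      f p.1.1 * p.1.2 ^ 2 + Stransform f p.2.1 * p.2.2 ^ 2 ≤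
        p.1.2 ^ 2 + p.2.2 ^ 2 -
          2 * p.1.2 * p.2.2 * Real.cos (min (dist p.1.1 p.2.1) (π / 2)) := by
    rintro ⟨⟨x₁, r₁⟩, ⟨x₂, r₂⟩⟩
    simp only
    set c := Real.cos (min (dist x₁ x₂) (π / 2)) with hcdef
    have hc0 : 0 ≤ c := by
      apply Real.cos_nonneg_of_mem_Icc
      constructor
      · have : (0:ℝ) ≤ min (dist x₁ x₂) (π/2) := le_min dist_nonneg (by positivity)
        linarith [Real.pi_pos]
      · exact min_le_right _ _
    have hc1 : c ≤ 1 := Real.cos_le_one _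
    have hS : Stransform f x₂ ≤ 1 - c ^ 2 / (1 - f x₁) := hS_le x₁ x₂
    have hSr : Stransform f x₂ * r₂ ^ 2 ≤ (1 - c ^ 2 / (1 - f x₁)) * r₂ ^ 2 :=
      mul_le_mul_of_nonneg_right hS (sq_nonneg _)
    have ha : 0 < 1 - f x₁ := hfx x₁
    have hkey2 : (1 - f x₁) * r₁ ^ 2 + c ^ 2 / (1 - f x₁) * r₂ ^ 2 ≥ 2 * r₁ * r₂ * c := by
      have hdiv : (1 - f x₁) * (c ^ 2 / (1 - f x₁) * r₂ ^ 2) = c ^ 2 * r₂ ^ 2 := by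
        field_simp
      nlinarith [sq_nonneg ((1 - f x₁) * r₁ - c * r₂), ha, hdiv, sq_nonneg r₂, sq_nonneg r₁]
    nlinarith [hSr, hkey2]
  -- measurability
  have hm11 : Measurable fun p : (X × ℝ) × (X × ℝ) => p.1.1 :=
    measurable_fst.comp measurable_fst
  have hm21 : Measurable fun p : (X × ℝ) × (X × ℝ) => p.2.1 :=
    measurable_fst.comp measurable_snd
  have hm12 : Measurable fun p : (X × ℝ) × (X × ℝ) => p.1.2 :=
    measurable_snd.comp measurable_fst
  have hm22 : Measurable fun p : (X × ℝ) × (X × ℝ) => p.2.2 :=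
    measurable_snd.comp measurable_snd
  have hG1m : Measurable fun p : (X × ℝ) × (X × ℝ) => f p.1.1 * p.1.2 ^ 2 :=
    (hc.measurable.comp hm11).mul (hm12.pow_const 2)
  have hG2m : Measurable fun p : (X × ℝ) × (X × ℝ) => Stransform f p.2.1 * p.2.2 ^ 2 :=
    (hSmeas.comp hm21).mul (hm22.pow_const 2)
  -- bounds and integrability
  have hC0 : 0 ≤ C := (abs_nonneg _).trans (hC (Classical.arbitrary X))
  set B : ℝ := 1 + 1 / (1 - M) with hBdef
  have hB0 : 0 ≤ B := by positivity
  have hSabs : ∀ y, |Stransform f y| ≤ B := by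
    intro y
    have h1 := hS_lb y
    have h2 := hS_ub y
    have h3 : (0:ℝ) < 1 / (1 - M) := by positivity
    rw [abs_le]; constructor <;> simp only [hBdef] <;> linarith
  set K : ℝ := C + B with hKdef
  have hK0 : 0 ≤ K := by positivity
  have hbmeas : Measurable fun p : (X × ℝ) × (X × ℝ) => K * (p.1.2 ^ 2 + p.2.2 ^ 2) :=
    measurable_const.mul ((hm12.pow_const 2).add (hm22.pow_const 2))
  have hbint : Integrable (fun p : (X × ℝ) × (X × ℝ) => K * (p.1.2 ^ 2 + p.2.2 ^ 2)) α := by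
    refine ⟨hbmeas.aestronglyMeasurable, ?_⟩
    rw [hasFiniteIntegral_iff_ofReal (ae_of_all _ fun p => by positivity)]
    calc ∫⁻ p, ENNReal.ofReal (K * (p.1.2 ^ 2 + p.2.2 ^ 2)) ∂α
        = ∫⁻ p, ENNReal.ofReal K * ENNReal.ofReal (p.1.2 ^ 2 + p.2.2 ^ 2) ∂α := by
          simp_rw [ENNReal.ofReal_mul hK0]
      _ = ENNReal.ofReal K * ∫⁻ p, ENNReal.ofReal (p.1.2 ^ 2 + p.2.2 ^ 2) ∂α :=
          lintegral_const_mul' _ _ ENNReal.ofReal_ne_top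
      _ < ⊤ := ENNReal.mul_lt_top ENNReal.ofReal_lt_top hmom
  have hG1int : Integrable (fun p : (X × ℝ) × (X × ℝ) => f p.1.1 * p.1.2 ^ 2) α := by
    refine hbint.mono' hG1m.aestronglyMeasurable (ae_of_all _ fun p => ?_)
    rw [Real.norm_eq_abs, abs_mul, abs_of_nonneg (sq_nonneg p.1.2)]
    have := hC p.1.1
    nlinarith [sq_nonneg p.1.2, sq_nonneg p.2.2, abs_nonneg (f p.1.1)]
  have hG2int : Integrable (fun p : (X × ℝ) × (X × ℝ) => Stransform f p.2.1 * p.2.2 ^ 2) α := by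
    refine hbint.mono' hG2m.aestronglyMeasurable (ae_of_all _ fun p => ?_)
    rw [Real.norm_eq_abs, abs_mul, abs_of_nonneg (sq_nonneg p.2.2)]
    have := hSabs p.2.1
    nlinarith [sq_nonneg p.1.2, sq_nonneg p.2.2, abs_nonneg (Stransform f p.2.1)]
  have hGint := hG1int.add hG2int
  -- marginal identities
  have hint1 : ∫ x, f x ∂μ = ∫ p, f p.1.1 * p.1.2 ^ 2 ∂α := by
    rw [← h1]
    unfold hmarg1
    rw [integral_map hm11.aemeasurable hc.aestronglyMeasurable]
    have hrw : (fun p : (X × ℝ) × (X × ℝ) => ENNReal.ofReal (p.1.2 ^ 2)) =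
        fun p => ((Real.toNNReal (p.1.2 ^ 2) : NNReal) : ℝ≥0∞) := rfl
    rw [hrw, integral_withDensity_eq_integral_smul ((hm12.pow_const 2).real_toNNReal)]
    congr 1
    funext p
    rw [NNReal.smul_def, smul_eq_mul, Real.coe_toNNReal _ (sq_nonneg _)]
    ring
  have hint2 : ∫ y, Stransform f y ∂ν = ∫ p, Stransform f p.2.1 * p.2.2 ^ 2 ∂α := by
    rw [← h2]
    unfold hmarg2
    rw [integral_map hm21.aemeasurable hScont.aestronglyMeasurable]
    have hrw : (fun p : (X × ℝ) × (X × ℝ) => ENNReal.ofReal (p.2.2 ^ 2)) =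
        fun p => ((Real.toNNReal (p.2.2 ^ 2) : NNReal) : ℝ≥0∞) := rfl
    rw [hrw, integral_withDensity_eq_integral_smul ((hm22.pow_const 2).real_toNNReal)]
    congr 1
    funext p
    rw [NNReal.smul_def, smul_eq_mul, Real.coe_toNNReal _ (sq_nonneg _)]
    ring
  -- put everything together
  set G := fun p : (X × ℝ) × (X × ℝ) =>
    f p.1.1 * p.1.2 ^ 2 + Stransform f p.2.1 * p.2.2 ^ 2 with hGdef
  calc ENNReal.ofReal (∫ x, f x ∂μ + ∫ y, Stransform f y ∂ν)
      = ENNReal.ofReal (∫ p, G p ∂α) := by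
        rw [hint1, hint2, ← integral_add hG1int hG2int]
    _ ≤ ENNReal.ofReal (∫ p, max (G p) 0 ∂α) :=
        ENNReal.ofReal_le_ofReal
          (integral_mono hGint hGint.pos_part fun p => le_max_left _ _)
    _ = ∫⁻ p, ENNReal.ofReal (max (G p) 0) ∂α :=
        ofReal_integral_eq_lintegral_ofReal hGint.pos_part
          (ae_of_all _ fun p => le_max_right _ _)
    _ = ∫⁻ p, ENNReal.ofReal (G p) ∂α := by
        refine lintegral_congr fun p => ?_
        rcases le_total 0 (G p) with h | h
        · rw [max_eq_left h]
        · rw [max_eq_right h, ENNReal.ofReal_of_nonpos h, ENNReal.ofReal_zero]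
    _ ≤ ∫⁻ p, ENNReal.ofReal (p.1.2 ^ 2 + p.2.2 ^ 2 -
          2 * p.1.2 * p.2.2 * Real.cos (min (dist p.1.1 p.2.1) (π / 2))) ∂α :=
        lintegral_mono fun p => ENNReal.ofReal_le_ofReal (hpoint p)
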